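/- Let M be an N×N complex matrix, T > 0, and let f : ℝ → ℂ^N be continuous and T-periodic. If the matrix exp(T·M) - I is invertible (equivalently, 1 is not a Floquet multiplier), then there exists a unique function y : ℝ → ℂ^N such that y is T-periodic and y'(t) = M y(t) + f(t) for all t ∈ ℝ. -/

import Mathlib

open Set NormedSpace

private lemma ode_unique_aux {E : Type*} [NormedAddCommGroup E] [NormedSpace ℝ E]
    (A : E →L[ℝ] E) (f : ℝ → E) {y z : ℝ → E}
    (hy : ∀ t, HasDerivAt y (A (y t) + f t) t)
    (hz : ∀ t, HasDerivAt z (A (z t) + f t) t)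
    {t₀ : ℝ} (h0 : y t₀ = z t₀) : y = z := by
  have hv : ∀ t : ℝ, LipschitzOnWith ‖A‖₊ (fun x => A x + f t) (Set.univ : Set E) := by
    intro t
    refine LipschitzWith.lipschitzOnWith ?_
    intro x y'
    simpa [edist_add_right] using A.lipschitz x y'
  funext t1
  have ht₀ : t₀ ∈ Set.Ioo (min t₀ t1 - 1) (max t₀ t1 + 1) :=
    ⟨by have := min_le_left t₀ t1; linarith, by have := le_max_left t₀ t1; linarith⟩
  have hcy : ContinuousOn y (Set.Icc (min t₀ t1 - 1) (max t₀ t1 + 1)) :=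
    (continuous_iff_continuousAt.2 fun t => (hy t).continuousAt).continuousOn
  have hcz : ContinuousOn z (Set.Icc (min t₀ t1 - 1) (max t₀ t1 + 1)) :=
    (continuous_iff_continuousAt.2 fun t => (hz t).continuousAt).continuousOn
  have := ODE_solution_unique_of_mem_Icc (v := fun t x => A x + f t)
    (s := fun _ => (Set.univ : Set E)) (fun t _ => hv t) ht₀ hcy (fun t _ => hy t) (fun _ _ => trivial)
    hcz (fun t _ => hz t) (fun _ _ => trivial) h0
  exact this ⟨by have := min_le_right t₀ t1; linarith, by have := le_max_right t₀ t1; linarith⟩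

set_option maxHeartbeats 1000000 in
set_option synthInstance.maxHeartbeats 400000 in
theorem stmt_10 {N : ℕ} (M : Matrix (Fin N) (Fin N) ℂ) (T : ℝ) (hT : 0 < T)
    (f : ℝ → Fin N → ℂ) (hf_cont : Continuous f) (hf_per : ∀ t, f (t + T) = f t)
    (hmult : IsUnit (NormedSpace.exp ((T : ℂ) • M) - 1)) :
    ∃! y : ℝ → Fin N → ℂ, (∀ t, y (t + T) = y t) ∧
      ∀ t : ℝ, HasDerivAt y (M.mulVec (y t) + f t) t := by
  classical
  letI : NormedAlgebra ℚ ((Fin N → ℂ) →L[ℝ] (Fin N → ℂ)) := .restrictScalars ℚ ℝ _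
  -- the matrix acting as a real-continuous-linear map
  let ψₗ : Matrix (Fin N) (Fin N) ℂ →ₗ[ℝ] ((Fin N → ℂ) →L[ℝ] (Fin N → ℂ)) :=
    { toFun := fun P => LinearMap.toContinuousLinearMap ((P.mulVecLin).restrictScalars ℝ)
      map_add' := fun P Q => by
        ext v
        simp [Matrix.add_mulVec]
      map_smul' := fun t P => by
        ext v
        rw [show t • P = (algebraMap ℝ ℂ t) • P from (algebraMap_smul ℂ t P).symm]
        simp [Matrix.smul_mulVec, algebraMap_smul] }
  have hψ_apply : ∀ P v, ψₗ P v = P.mulVec v := fun P v => by simp [ψₗ]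
  let ψ : Matrix (Fin N) (Fin N) ℂ →+* ((Fin N → ℂ) →L[ℝ] (Fin N → ℂ)) :=
    { toFun := ψₗ
      map_one' := by ext v; simp [hψ_apply]
      map_mul' := fun P Q => by
        ext v
        simp [hψ_apply, ContinuousLinearMap.mul_apply, ← Matrix.mulVec_mulVec]
      map_zero' := ψₗ.map_zero
      map_add' := ψₗ.map_add }
  have hψc : Continuous ψ := ψₗ.continuous_of_finiteDimensional
  set A : (Fin N → ℂ) →L[ℝ] (Fin N → ℂ) := ψₗ M with hAdef
  have hA : ∀ v, A v = M.mulVec v := fun v => hψ_apply M v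
  -- transfer the unit hypothesis
  have hexpψ : ψ (NormedSpace.exp ((T : ℂ) • M)) = NormedSpace.exp (T • A) := by
    letI : SeminormedRing (Matrix (Fin N) (Fin N) ℂ) := Matrix.linftyOpSemiNormedRing
    letI : NormedRing (Matrix (Fin N) (Fin N) ℂ) := Matrix.linftyOpNormedRing
    letI : NormedAlgebra ℚ (Matrix (Fin N) (Fin N) ℂ) := Matrix.linftyOpNormedAlgebra
    haveI : @CompleteSpace (Matrix (Fin N) (Fin N) ℂ) PseudoMetricSpace.toUniformSpace :=
      by exact (inferInstance : CompleteSpace (Matrix (Fin N) (Fin N) ℂ))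
    refine (NormedSpace.map_exp (𝔸 := Matrix (Fin N) (Fin N) ℂ) ψ hψc ((T : ℂ) • M)).trans ?_
    congr 1
    rw [show ((T : ℂ) • M) = T • M by
      rw [show ((T : ℂ)) = algebraMap ℝ ℂ T from rfl, algebraMap_smul]]
    exact ψₗ.map_smul T M
  have hU : IsUnit (NormedSpace.exp (T • A) - 1) := by
    have := hmult.map ψ
    rwa [map_sub, map_one, hexpψ] at this
  -- the fundamental ingredients
  have hcont : Continuous fun s : ℝ => NormedSpace.exp ((-s) • A) (f s) := by
    refine Continuous.clm_apply ?_ hf_cont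
    exact NormedSpace.exp_continuous.comp (continuous_neg.smul continuous_const)
  set gI : ℝ → Fin N → ℂ := fun t => ∫ s in (0:ℝ)..t, NormedSpace.exp ((-s) • A) (f s)
    with hgIdef
  have hgd : ∀ t, HasDerivAt gI (NormedSpace.exp ((-t) • A) (f t)) t := fun t =>
    intervalIntegral.integral_hasDerivAt_right (hcont.intervalIntegrable _ _)
      hcont.aestronglyMeasurable.stronglyMeasurableAtFilter hcont.continuousAt
  have hmul1 : ∀ t : ℝ, NormedSpace.exp (t • A) * NormedSpace.exp ((-t) • A) = 1 := by
    intro t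
    have hc : Commute (t • A) ((-t) • A) := by
      show (t • A) * ((-t) • A) = ((-t) • A) * (t • A)
      ext v
      simp [ContinuousLinearMap.mul_apply, map_smul, smul_comm]
    rw [← NormedSpace.exp_add_of_commute hc]
    have h0 : t • A + (-t) • A = 0 := by module
    rw [h0, NormedSpace.exp_zero]
  have hcommA : ∀ t : ℝ, NormedSpace.exp (t • A) * A = A * NormedSpace.exp (t • A) :=
    fun t => by
      have hAc : Commute (t • A) A := by
        show (t • A) * A = A * (t • A)
        ext v
        simp [ContinuousLinearMap.mul_apply, map_smul]
      exact (Commute.exp_left hAc).eq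
  -- the general solution with initial value `c`
  have hsol : ∀ (c : Fin N → ℂ) (t : ℝ),
      HasDerivAt (fun u : ℝ => NormedSpace.exp (u • A) (c + gI u))
        (A (NormedSpace.exp (t • A) (c + gI t)) + f t) t := by
    intro c t
    have h1 : HasDerivAt (fun u : ℝ => NormedSpace.exp (u • A))
        (NormedSpace.exp (t • A) * A) t := hasDerivAt_exp_smul_const A t
    have h2 : HasDerivAt (fun u : ℝ => c + gI u) (NormedSpace.exp ((-t) • A) (f t)) t :=
      (hgd t).const_add c
    have h3 := h1.clm_apply h2
    have e1 : (NormedSpace.exp (t • A) * A) (c + gI t)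
        = A (NormedSpace.exp (t • A) (c + gI t)) := by
      rw [hcommA t, ContinuousLinearMap.mul_apply]
    have e2 : NormedSpace.exp (t • A) (NormedSpace.exp ((-t) • A) (f t)) = f t := by
      rw [← ContinuousLinearMap.mul_apply, hmul1 t, ContinuousLinearMap.one_apply]
    rw [e1, e2] at h3
    exact h3
  have h0A : (0:ℝ) • A = 0 := zero_smul ℝ A
  set B : (Fin N → ℂ) →L[ℝ] (Fin N → ℂ) := NormedSpace.exp (T • A) with hBdef
  -- choose the initial value
  set c0 : Fin N → ℂ := (↑hU.unit⁻¹ : (Fin N → ℂ) →L[ℝ] (Fin N → ℂ)) (-(B (gI T))) with hc0def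
  have hc0 : (B - 1) c0 = -(B (gI T)) := by
    have h1 : (B - 1) * (↑hU.unit⁻¹ : (Fin N → ℂ) →L[ℝ] (Fin N → ℂ)) = 1 := by
      have h4 := hU.unit.mul_inv
      rwa [hU.unit_spec] at h4
    calc (B - 1) c0 = ((B - 1) * ↑hU.unit⁻¹) (-(B (gI T))) := rfl
      _ = -(B (gI T)) := by rw [h1, ContinuousLinearMap.one_apply]
  set y : ℝ → Fin N → ℂ := fun t => NormedSpace.exp (t • A) (c0 + gI t) with hydef
  have hgI0 : gI 0 = 0 := intervalIntegral.integral_same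
  have hy0 : y 0 = c0 := by
    show NormedSpace.exp ((0:ℝ) • A) (c0 + gI 0) = c0
    rw [h0A, NormedSpace.exp_zero, ContinuousLinearMap.one_apply, hgI0, add_zero]
  have hyT : y T = c0 := by
    have : B c0 - c0 = -(B (gI T)) := by
      rw [← hc0]; simp [ContinuousLinearMap.sub_apply]
    have h2 : B (c0 + gI T) = c0 := by
      rw [map_add]
      linear_combination this
    simpa [hydef, hBdef] using h2
  have hyder : ∀ t, HasDerivAt y (A (y t) + f t) t := fun t => hsol c0 t
  -- periodicity
  have hyper : ∀ t, y (t + T) = y t := by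
    have hz : ∀ t, HasDerivAt (fun u => y (u + T)) (A (y (t + T)) + f t) t := by
      intro t
      have h1 : HasDerivAt (fun u : ℝ => u + T) 1 t := (hasDerivAt_id t).add_const T
      have := (hyder (t + T)).scomp t h1
      rw [one_smul, hf_per t] at this
      exact this
    have h0 : (fun u => y (u + T)) 0 = y 0 := by
      simp only [zero_add]
      rw [hyT, hy0]
    have := ode_unique_aux A f hz hyder h0
    intro t
    exact congrFun this t
  refine ⟨y, ⟨hyper, fun t => by rw [← hA]; exact hyder t⟩, ?_⟩
  -- uniqueness
  rintro y2 ⟨h2per, h2der⟩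
  have h2der' : ∀ t, HasDerivAt y2 (A (y2 t) + f t) t := fun t => by
    rw [hA]; exact h2der t
  -- the difference solves the homogeneous equation
  have hw : ∀ t, HasDerivAt (fun u => y2 u - y u) (A (y2 t - y t) + (fun _ => (0 : Fin N → ℂ)) t) t := by
    intro t
    have := (h2der' t).sub (hyder t)
    have e : A (y2 t) + f t - (A (y t) + f t) = A (y2 t - y t) + (0 : Fin N → ℂ) := by
      rw [map_sub]; abel
    rwa [e] at this
  have hu : ∀ t, HasDerivAt (fun u : ℝ => NormedSpace.exp (u • A) (y2 0 - y 0))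
      (A (NormedSpace.exp (t • A) (y2 0 - y 0)) + (fun _ => (0 : Fin N → ℂ)) t) t := by
    intro t
    have h1 : HasDerivAt (fun u : ℝ => NormedSpace.exp (u • A))
        (NormedSpace.exp (t • A) * A) t := hasDerivAt_exp_smul_const A t
    have h3 := h1.clm_apply (hasDerivAt_const t (y2 0 - y 0))
    have e1 : (NormedSpace.exp (t • A) * A) (y2 0 - y 0)
        = A (NormedSpace.exp (t • A) (y2 0 - y 0)) := by
      rw [hcommA t, ContinuousLinearMap.mul_apply]
    rw [e1, map_zero, add_zero] at h3
    simpa using h3.add_const 0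
  have h0 : (fun u => y2 u - y u) 0 = (fun u : ℝ => NormedSpace.exp (u • A) (y2 0 - y 0)) 0 := by
    show y2 0 - y 0 = NormedSpace.exp ((0:ℝ) • A) (y2 0 - y 0)
    rw [h0A, NormedSpace.exp_zero, ContinuousLinearMap.one_apply]
  have heq := ode_unique_aux A (fun _ => (0 : Fin N → ℂ)) hw hu h0
  -- evaluate periodicity of the difference at T
  have hwT : y2 T - y T = y2 0 - y 0 := by
    have := h2per 0
    have h2 := hyper 0
    rw [zero_add] at this h2
    rw [this, h2]
  have hBfix : B (y2 0 - y 0) = y2 0 - y 0 := by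
    have := congrFun heq T
    simpa [hwT, hBdef] using this.symm
  have hzero : y2 0 - y 0 = 0 := by
    have h1 : (B - 1) (y2 0 - y 0) = 0 := by
      simp [ContinuousLinearMap.sub_apply, hBfix]
    have h3 : (↑hU.unit⁻¹ : (Fin N → ℂ) →L[ℝ] (Fin N → ℂ)) * (B - 1) = 1 := by
      have h4 := hU.unit.inv_mul
      rwa [hU.unit_spec] at h4
    have h5 : ((↑hU.unit⁻¹ : (Fin N → ℂ) →L[ℝ] (Fin N → ℂ)) * (B - 1)) (y2 0 - y 0) = 0 := by
      rw [ContinuousLinearMap.mul_apply, h1, map_zero]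
    rwa [h3, ContinuousLinearMap.one_apply] at h5
  funext t
  have := congrFun heq t
  rw [hzero, map_zero] at this
  exact sub_eq_zero.mp this
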